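/- There is a Borel (even Baire measurable) polymorphism from K₂^ℕ to K₂ that is not continuous, where K₂ is the complete graph on 2 vertices. Concretely: there exists a Borel non-continuous function f : {0,1}^ℕ → {0,1} such that whenever x, y ∈ {0,1}^ℕ satisfy x(n) ≠ y(n) for all n, then f(x) ≠ f(y). -/

import Mathlib

/-- There is a Borel, non-continuous polymorphism `K₂^ℕ → K₂`: a Borel map
`f : {0,1}^ℕ → {0,1}` that is not continuous and satisfies `f x ≠ f y` whenever
`x(n) ≠ y(n)` for all `n`. -/
theorem stmt_16 : ∃ f : (ℕ → Bool) → Bool, Measurable f ∧ ¬ Continuous f ∧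
    ∀ x y : ℕ → Bool, (∀ n, x n ≠ y n) → f x ≠ f y := by
  classical
  set E : Set (ℕ → Bool) := {x | ∃ n, ∀ m, n ≤ m → x m = x n} with hEdef
  have hEc : E.Countable := by
    have hsub : E ⊆ ⋃ n, {x : ℕ → Bool | ∀ m, n ≤ m → x m = x n} := by
      rintro x ⟨n, hn⟩; exact Set.mem_iUnion.2 ⟨n, hn⟩
    refine Set.Countable.mono hsub (Set.countable_iUnion fun n => ?_)
    have hfin : {x : ℕ → Bool | ∀ m, n ≤ m → x m = x n}.Finite := by
      apply Set.Finite.of_finite_image (f := fun x => (fun i : Fin (n+1) => x i))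
        (Set.toFinite _)
      intro x hx y hy hxy
      funext m
      rcases le_or_gt n m with h | h
      · have hxm := hx m h
        have hym := hy m h
        have h2 := congrFun hxy ⟨n, by omega⟩
        simp only at h2
        rw [hxm, hym, h2]
      · have := congrFun hxy ⟨m, by omega⟩; simpa using this
    exact hfin.countable
  have hE : MeasurableSet E := hEc.measurableSet
  refine ⟨fun x => if x ∈ E then !(x 0) else x 0, ?_, ?_, ?_⟩
  · exact Measurable.ite hE
      ((measurable_of_countable Bool.not).comp (measurable_pi_apply 0))
      (measurable_pi_apply 0)
  · intro hcont
    set c : ℕ → Bool := fun _ => false with hc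
    have hcE : c ∈ E := ⟨0, fun m _ => rfl⟩
    set xs : ℕ → ℕ → Bool := fun k n => if n < k then false else decide (Even n)
      with hxs
    have hxsE : ∀ k, xs k ∉ E := by
      rintro k ⟨n, hn⟩
      have h1 := hn (max n k) (le_max_left _ _)
      have h2 := hn (max n k + 1) (by omega)
      have hk1 : ¬ (max n k < k) := by omega
      have hk2 : ¬ (max n k + 1 < k) := by omega
      simp only [hxs, hk1, hk2, if_false] at h1 h2
      have h3 := h1.trans h2.symm
      simp [Nat.even_add_one, decide_eq_decide] at h3
      exact (Nat.even_or_odd (n ⊔ k)).elim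
        (fun h => (Nat.not_odd_iff_even.mpr h) (h3.mp h))
        (fun h => (Nat.not_odd_iff_even.mpr (h3.mpr h)) h)
    have hT : Filter.Tendsto xs Filter.atTop (nhds c) := by
      rw [tendsto_pi_nhds]
      intro n
      apply Filter.Tendsto.congr' (f₁ := fun _ => false)
      · filter_upwards [Filter.eventually_ge_atTop (n+1)] with k hk
        simp [hxs, show n < k by omega]
      · exact tendsto_const_nhds
    have hT' := (hcont.tendsto c).comp hT
    have hfc : (if c ∈ E then !(c 0) else c 0) = true := by rw [if_pos hcE]; rfl
    rw [hfc] at hT'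
    have hmem : ∀ᶠ b in nhds true, b ∈ ({true} : Set Bool) :=
      Filter.eventually_of_mem ((isOpen_discrete ({true} : Set Bool)).mem_nhds rfl)
        (fun _ hb => hb)
    have hev := hT'.eventually hmem
    rw [Filter.eventually_atTop] at hev
    obtain ⟨K, hK⟩ := hev
    have h1 := hK (K + 1) (by omega)
    simp only [Function.comp, hxsE (K+1), if_false, Set.mem_singleton_iff] at h1
    simp [hxs] at h1
  · intro x y hxy
    have hy : y = fun n => !(x n) := by
      funext n
      have := hxy n
      revert this
      cases x n <;> cases y n <;> simp
    have hEy : (y ∈ E) ↔ (x ∈ E) := by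
      subst hy
      constructor
      · rintro ⟨n, hn⟩
        exact ⟨n, fun m hm => Bool.not_inj (hn m hm)⟩
      · rintro ⟨n, hn⟩
        exact ⟨n, fun m hm => congrArg (! ·) (hn m hm)⟩
    have hEy' : ((fun n => !x n) ∈ E) ↔ (x ∈ E) := hy ▸ hEy
    by_cases hx : x ∈ E
    · simp [hx, hEy'.mpr hx, hy]
    · simp [hx, show (fun n => !x n) ∉ E from fun h => hx (hEy'.mp h), hy]
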